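/- Let ψ ∈ Ψ(a,b) (a Grand Lebesgue generating function) and suppose K(p,q) < ∞ for (p,q) in a nonempty set B, with D = {q : ∃p, (p,q) ∈ B} nonempty. Define ζ(q) = inf_{p : (p,q) ∈ B} ψ(p) K(p,q). Then for every f with ‖f‖_{Gψ} < ∞, ‖f̂‖_{Gζ(S^{d-1})} ≤ ‖f‖_{Gψ}, i.e. the restriction Fourier operator has Grand-Lebesgue operator norm at most 1. -/

import Mathlib

open MeasureTheory Real Set

/-- The Fourier transform `f̂(k) = ∫ e^{-i⟨k,x⟩} f(x) dx` on `ℝ^d`. -/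
noncomputable def fourierT (d : ℕ) (f : EuclideanSpace ℝ (Fin d) → ℂ)
    (k : EuclideanSpace ℝ (Fin d)) : ℂ :=
  ∫ x, Complex.exp (-(Complex.I * ((inner ℝ k x : ℝ) : ℂ))) * f x

/-- Grand Lebesgue space bound for the restriction Fourier transform: if the restriction
inequality `‖f̂‖_{L^q(S^{d-1})} ≤ K(p,q) ‖f‖_{L^p}` holds on a set `B` of pairs `(p,q)`
with `p ∈ (a,b)`, and `ζ(q) = inf_{p : (p,q) ∈ B} ψ(p) K(p,q)`, then for every `q` in
`D = {q : ∃ p, (p,q) ∈ B}` one has `‖f̂‖_{L^q(S^{d-1})} ≤ ζ(q) ‖f‖_{Gψ}`; that is, the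
Grand Lebesgue operator norm of the restriction operator is at most `1`. -/
theorem grand_lebesgue_restriction (d : ℕ) (hd : 2 ≤ d) (a b : ℝ) (hab : 1 ≤ a) (hab2 : a < b)
    (ψ : ℝ → ℝ) (hψpos : ∃ ε > 0, ∀ p ∈ Ioo a b, ε ≤ ψ p)
    (B : Set (ℝ × ℝ)) (hBne : B.Nonempty) (hB : ∀ pq ∈ B, pq.1 ∈ Ioo a b ∧ 1 ≤ pq.2)
    (K : ℝ → ℝ → ℝ) (hKpos : ∀ pq ∈ B, 0 < K pq.1 pq.2)
    (f : EuclideanSpace ℝ (Fin d) → ℂ)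
    (hrestr : ∀ pq ∈ B,
      (∫ k in Metric.sphere (0 : EuclideanSpace ℝ (Fin d)) 1,
          ‖fourierT d f k‖ ^ pq.2 ∂μH[(d : ℝ) - 1]) ^ (1 / pq.2)
        ≤ K pq.1 pq.2 * (∫ x, ‖f x‖ ^ pq.1) ^ (1 / pq.1))
    (hGbdd : BddAbove { y : ℝ | ∃ p ∈ Ioo a b,
      y = (∫ x, ‖f x‖ ^ p) ^ (1 / p) / ψ p }) :
    ∀ q : ℝ, (∃ p, (p, q) ∈ B) →
      (∫ k in Metric.sphere (0 : EuclideanSpace ℝ (Fin d)) 1,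
          ‖fourierT d f k‖ ^ q ∂μH[(d : ℝ) - 1]) ^ (1 / q)
        ≤ (sInf { z : ℝ | ∃ p, (p, q) ∈ B ∧ z = ψ p * K p q }) *
          sSup { y : ℝ | ∃ p ∈ Ioo a b,
            y = (∫ x, ‖f x‖ ^ p) ^ (1 / p) / ψ p } := by
  
  obtain ⟨ε, hε, hψ⟩ := hψpos
  intro q hq
  obtain ⟨p₀, hp₀⟩ := hq
  set S := { y : ℝ | ∃ p ∈ Ioo a b,
      y = (∫ x, ‖f x‖ ^ p) ^ (1 / p) / ψ p } with hS
  set M := sSup S with hMdef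
  set L := (∫ k in Metric.sphere (0 : EuclideanSpace ℝ (Fin d)) 1,
      ‖fourierT d f k‖ ^ q ∂μH[(d : ℝ) - 1]) ^ (1 / q) with hL
  -- M is nonnegative
  have hp1 : (a + b) / 2 ∈ Ioo a b := ⟨by linarith, by linarith⟩
  have hψ1 : 0 < ψ ((a + b) / 2) := lt_of_lt_of_le hε (hψ _ hp1)
  have hy1 : (0:ℝ) ≤ (∫ x, ‖f x‖ ^ ((a + b) / 2)) ^ (1 / ((a + b) / 2)) / ψ ((a + b) / 2) :=
    div_nonneg (Real.rpow_nonneg (integral_nonneg fun x =>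
      Real.rpow_nonneg (norm_nonneg _) _) _) hψ1.le
  have hM0 : 0 ≤ M :=
    le_trans hy1 (le_csSup hGbdd ⟨_, hp1, rfl⟩)
  -- main estimate
  have hLz : ∀ p, (p, q) ∈ B → L ≤ ψ p * K p q * M := by
    intro p hpq
    have hp := (hB _ hpq).1
    have hψp : 0 < ψ p := lt_of_lt_of_le hε (hψ p hp)
    have hK := hKpos _ hpq
    have h1 := hrestr _ hpq
    have h2 : (∫ x, ‖f x‖ ^ p) ^ (1 / p) / ψ p ≤ M :=
      le_csSup hGbdd ⟨p, hp, rfl⟩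
    have h3 : (∫ x, ‖f x‖ ^ p) ^ (1 / p) ≤ M * ψ p :=
      (div_le_iff₀ hψp).mp h2
    calc L ≤ K p q * (∫ x, ‖f x‖ ^ p) ^ (1 / p) := h1
      _ ≤ K p q * (M * ψ p) := mul_le_mul_of_nonneg_left h3 hK.le
      _ = ψ p * K p q * M := by ring
  rcases hM0.eq_or_lt with hM | hM
  · have := hLz p₀ hp₀
    rw [← hM, mul_zero] at this ⊢
    exact this
  · have hdiv : L / M ≤ sInf { z : ℝ | ∃ p, (p, q) ∈ B ∧ z = ψ p * K p q } := by
      refine le_csInf ⟨ψ p₀ * K p₀ q, p₀, hp₀, rfl⟩ ?_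
      rintro z ⟨p, hpq, rfl⟩
      exact (div_le_iff₀ hM).mpr (hLz p hpq)
    exact (div_le_iff₀ hM).mp hdiv
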